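/- In a finite MV-algebra X, for all x, y ∈ X the Fibonacci sequence u₀ = x, u₁ = y, u_{n+2} = u_n ⊕ u_{n+1} is eventually stationary: there exists k such that u_n = u_k for all n ≥ k. -/

import Mathlib

/-- An MV-algebra: an abelian monoid `(X, add, zero)` with a unary `neg` satisfying
`x ⊕ ¬0 = ¬0`, `¬¬x = x`, and `¬(¬x ⊕ y) ⊕ y = ¬(¬y ⊕ x) ⊕ x`. -/
structure MVAlg (X : Type) where
  add : X → X → X
  zero : X
  neg : X → X
  add_assoc : ∀ a b c : X, add (add a b) c = add a (add b c)
  add_comm : ∀ a b : X, add a b = add b a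
  zero_add : ∀ a : X, add zero a = a
  add_neg_zero : ∀ a : X, add a (neg zero) = neg zero
  neg_neg : ∀ a : X, neg (neg a) = a
  lukasiewicz : ∀ a b : X, add (neg (add (neg a) b)) b = add (neg (add (neg b) a)) a

namespace MVAlg

variable {X : Type}

/-- `1 = ¬0`. -/
def one (M : MVAlg X) : X := M.neg M.zero

/-- `x ⊙ y = ¬(¬x ⊕ ¬y)`. -/
def mul (M : MVAlg X) (x y : X) : X := M.neg (M.add (M.neg x) (M.neg y))

/-- `x ∨ y = ¬(¬x ⊕ y) ⊕ y`. -/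
def sup (M : MVAlg X) (x y : X) : X := M.add (M.neg (M.add (M.neg x) y)) y

/-- `x ∧ y = x ⊙ (¬x ⊕ y)`. -/
def inf (M : MVAlg X) (x y : X) : X := M.mul x (M.add (M.neg x) y)

/-- `x ≤ y` iff `¬x ⊕ y = 1`. -/
def le (M : MVAlg X) (x y : X) : Prop := M.add (M.neg x) y = M.one

/-- The Fibonacci sequence attached to `x, y`: `u₀ = x`, `u₁ = y`, `u_{n+2} = u_n ⊕ u_{n+1}`. -/
def fibSeq (M : MVAlg X) (x y : X) : ℕ → X
  | 0 => x
  | 1 => y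
  | (n+2) => M.add (MVAlg.fibSeq M x y n) (MVAlg.fibSeq M x y (n+1))

/-- Scalar multiple: `0·z = 0`, `(k+1)·z = k·z ⊕ z`. -/
def smul (M : MVAlg X) : ℕ → X → X
  | 0, _ => M.zero
  | (k+1), z => M.add (MVAlg.smul M k z) z

end MVAlg


namespace MVAlg
variable {X : Type} (M : MVAlg X)

lemma add_one' (a : X) : M.add a M.one = M.one := M.add_neg_zero a
lemma one_add' (a : X) : M.add M.one a = M.one := by
  rw [M.add_comm]; exact M.add_neg_zero a
lemma add_zero' (a : X) : M.add a M.zero = a := by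
  rw [M.add_comm]; exact M.zero_add a
lemma neg_one' : M.neg M.one = M.zero := M.neg_neg M.zero
lemma neg_add_self' (a : X) : M.add (M.neg a) a = M.one := by
  have h := M.lukasiewicz M.one a
  rw [M.neg_one', M.zero_add, M.add_one'] at h
  exact h

/-- The natural order: `a ≤ b` iff `b = a ⊕ d` for some `d`. -/
def le' (a b : X) : Prop := ∃ d, M.add a d = b

lemma le'_refl (a : X) : M.le' a a := ⟨M.zero, M.add_zero' a⟩

lemma le'_trans (a b c : X) (h1 : M.le' a b) (h2 : M.le' b c) : M.le' a c := by
  obtain ⟨d, hd⟩ := h1; obtain ⟨e, he⟩ := h2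
  exact ⟨M.add d e, by rw [← M.add_assoc, hd, he]⟩

lemma le'_one_eq (a b : X) (h : M.le' a b) : M.add (M.neg a) b = M.one := by
  obtain ⟨d, hd⟩ := h
  rw [← hd, ← M.add_assoc, M.neg_add_self' a, M.one_add']

lemma le'_antisymm (a b : X) (h1 : M.le' a b) (h2 : M.le' b a) : a = b := by
  have e1 := M.le'_one_eq a b h1
  have e2 := M.le'_one_eq b a h2
  have h := M.lukasiewicz a b
  rw [e1, e2, M.neg_one', M.zero_add, M.zero_add] at h
  exact h.symm

end MVAlg

theorem stmt_11 {X : Type} [Finite X] (M : MVAlg X) (x y : X) :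
    ∃ k : ℕ, ∀ n ≥ k, M.fibSeq x y n = M.fibSeq x y k := by
  letI : PartialOrder X :=
    { le := M.le'
      le_refl := M.le'_refl
      le_trans := M.le'_trans
      le_antisymm := M.le'_antisymm }
  haveI : WellFoundedGT X := Finite.to_wellFoundedGT
  have wf : WellFounded ((· > ·) : X → X → Prop) := this.wf
  have mono : Monotone (fun n => M.fibSeq x y (n + 1)) := by
    apply monotone_nat_of_le_succ
    intro n
    exact ⟨M.fibSeq x y n, by rw [M.add_comm]; rfl⟩
  obtain ⟨n, hn⟩ := (wellFoundedGT_iff_monotone_chain_condition (α := X)).mp ⟨wf⟩ ⟨fun n => M.fibSeq x y (n + 1), mono⟩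
  refine ⟨n + 1, fun m hm => ?_⟩
  obtain ⟨p, rfl⟩ : ∃ p, m = p + 1 := ⟨m - 1, by omega⟩
  exact (hn p (by omega)).symm
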